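/- Fix γ ∈ (0, 2^{−6}], τ₀ ≥ 4, and μ ∈ [0, 1/8] such that |ω₁ n − ω_m| ≥ γ|n|^{−τ₀} for all nonzero integers n and all integers m ≥ 2, where ω₁ = √(1+μ) and ω_m = √(m⁴+μ). Let Ω = ω₁ + ε with 0 < ε < ε₀, and ν : (pairs) → ℝ with |ν_{n,m}| ≤ Cε₀. Suppose |Ω n − √(ω_m² + n ν_{n,m})| ≤ 2γ|n|^{−τ₀} for some n ≠ 0, m ≥ 2 with m ≤ c₂√|n|. Then |n| ≥ (2γ/(C' ε₀))^{1/(τ₀+1)} for a constant C' depending only on c₂, C. -/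

import Mathlib

set_option maxHeartbeats 800000


/-- Estimates 6.4–6.5: a near-resonance of the perturbed frequencies forces
`|n| ≥ (2γ/(C'ε₀))^{1/(τ₀+1)}`, with `C'` depending only on `c₂, C`. -/
theorem near_resonance_forces_large_n (c₂ C : ℝ) (hc₂ : 0 < c₂) (hC : 0 < C) :
    ∃ C' : ℝ, 0 < C' ∧
      ∀ (γ τ₀ μ ε ε₀ Ω : ℝ) (ν : ℤ → ℕ → ℝ) (n : ℤ) (m : ℕ),
        0 < γ → γ ≤ (2:ℝ) ^ (-6 : ℤ) → 4 ≤ τ₀ → 0 ≤ μ → μ ≤ 1/8 →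
        (∀ (n' : ℤ) (m' : ℕ), n' ≠ 0 → 2 ≤ m' →
          4 * γ * |(n':ℝ)| ^ (-τ₀)
            ≤ |Real.sqrt (1 + μ) * |(n':ℝ)| - Real.sqrt ((m':ℝ)^4 + μ)|) →
        Ω = Real.sqrt (1 + μ) + ε → 0 < ε → ε < ε₀ →
        (∀ (n' : ℤ) (m' : ℕ), |ν n' m'| ≤ C * ε₀) →
        n ≠ 0 → 2 ≤ m → (m:ℝ) ≤ c₂ * Real.sqrt |(n:ℝ)| →
        0 ≤ (m:ℝ)^4 + μ + (n:ℝ) * ν n m →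
        abs (|Ω * (n:ℝ)| - Real.sqrt ((m:ℝ)^4 + μ + (n:ℝ) * ν n m))
            ≤ 2 * γ * |(n:ℝ)| ^ (-τ₀) →
        (2 * γ / (C' * ε₀)) ^ (1 / (τ₀ + 1)) ≤ |(n:ℝ)| := by
  refine ⟨1 + C/4, by positivity, ?_⟩
  intro γ τ₀ μ ε ε₀ Ω ν n m hγ hγ2 hτ hμ hμ2 hres hΩ hε hεε₀ hν hn hm2 hmn hpos hnear
  have hε₀ : 0 < ε₀ := hε.trans hεε₀
  set N : ℝ := |(n:ℝ)| with hN
  have hN1 : (1:ℝ) ≤ N := by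
    have h1 : (1:ℤ) ≤ |n| := Int.one_le_abs (by omega)
    calc (1:ℝ) = ((1:ℤ):ℝ) := by norm_num
    _ ≤ ((|n|:ℤ):ℝ) := by exact_mod_cast h1
    _ = N := by push_cast [hN]; ring
  have hNpos : (0:ℝ) < N := lt_of_lt_of_le one_pos hN1
  set ω1 : ℝ := Real.sqrt (1 + μ) with hω1
  set wm : ℝ := Real.sqrt ((m:ℝ)^4 + μ) with hwm
  set s : ℝ := Real.sqrt ((m:ℝ)^4 + μ + (n:ℝ) * ν n m) with hs
  have hm2' : (2:ℝ) ≤ (m:ℝ) := by exact_mod_cast hm2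
  have hm4 : (16:ℝ) ≤ (m:ℝ)^4 + μ := by
    have h4 : (2:ℝ)^4 ≤ (m:ℝ)^4 := pow_le_pow_left₀ (by norm_num) hm2' 4
    norm_num at h4 ⊢
    linarith
  have hwm4 : (4:ℝ) ≤ wm := by
    have : Real.sqrt 16 ≤ wm := Real.sqrt_le_sqrt hm4
    rwa [show (16:ℝ) = 4^2 by norm_num, Real.sqrt_sq (by norm_num)] at this
  have hs0 : 0 ≤ s := Real.sqrt_nonneg _
  -- |s - wm| ≤ |n * ν| / 4
  have hsq : s^2 = (m:ℝ)^4 + μ + (n:ℝ) * ν n m := Real.sq_sqrt hpos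
  have hwsq : wm^2 = (m:ℝ)^4 + μ := Real.sq_sqrt (by nlinarith)
  have hdiff : |s - wm| * (s + wm) = |(n:ℝ) * ν n m| := by
    have h1 : (s - wm) * (s + wm) = (n:ℝ) * ν n m := by
      have h2 : (s - wm) * (s + wm) = s^2 - wm^2 := by ring
      rw [h2, hsq, hwsq]; ring
    have habs : |s + wm| = s + wm := abs_of_nonneg (by linarith)
    calc |s - wm| * (s + wm) = |s - wm| * |s + wm| := by rw [habs]
    _ = |(s - wm) * (s + wm)| := (abs_mul _ _).symm
    _ = |(n:ℝ) * ν n m| := by rw [h1]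
  have hsm : |s - wm| * 4 ≤ |(n:ℝ) * ν n m| := by
    calc |s - wm| * 4 ≤ |s - wm| * (s + wm) := by
          have := abs_nonneg (s - wm); nlinarith
    _ = |(n:ℝ) * ν n m| := hdiff
  have hsm' : |s - wm| ≤ N * (C * ε₀) / 4 := by
    have hbd : |(n:ℝ) * ν n m| ≤ N * (C * ε₀) := by
      rw [abs_mul]
      exact mul_le_mul_of_nonneg_left (hν n m) (abs_nonneg _)
    linarith
  -- |Ω * n| = ω1 * N + ε * N
  have hΩn : |Ω * (n:ℝ)| = ω1 * N + ε * N := by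
    have hω1nn : 0 ≤ ω1 := Real.sqrt_nonneg _
    rw [abs_mul, abs_of_nonneg (by rw [hΩ]; linarith), hΩ]
    ring
  -- triangle inequality
  have htri : |ω1 * N - wm| ≤ |(|Ω * (n:ℝ)|) - s| + ε * N + |s - wm| := by
    have : ω1 * N - wm = ((|Ω * (n:ℝ)|) - s) + (-(ε * N)) + (s - wm) := by
      rw [hΩn]; ring
    calc |ω1 * N - wm| = |((|Ω * (n:ℝ)|) - s) + (-(ε * N)) + (s - wm)| := by rw [this]
    _ ≤ |((|Ω * (n:ℝ)|) - s) + (-(ε * N))| + |s - wm| := abs_add_le _ _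
    _ ≤ (|(|Ω * (n:ℝ)|) - s| + |(-(ε * N))|) + |s - wm| := by
          exact add_le_add_left (abs_add_le _ _) _
    _ = |(|Ω * (n:ℝ)|) - s| + ε * N + |s - wm| := by
          rw [abs_neg, abs_of_nonneg (mul_nonneg hε.le hNpos.le)]
  have hlow : 4 * γ * N ^ (-τ₀) ≤ |ω1 * N - wm| := by
    rw [hN, hwm]; exact hres n m hn hm2
  have hrpow_pos : (0:ℝ) < N ^ (-τ₀) := Real.rpow_pos_of_pos hNpos _
  -- 2γ N^{-τ₀} ≤ C' ε₀ N
  have hmain : 2 * γ * N ^ (-τ₀) ≤ (1 + C/4) * ε₀ * N := by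
    have h1 : 4 * γ * N ^ (-τ₀) ≤ 2 * γ * N ^ (-τ₀) + ε * N + N * (C * ε₀) / 4 := by
      calc 4 * γ * N ^ (-τ₀) ≤ |ω1 * N - wm| := hlow
      _ ≤ |(|Ω * (n:ℝ)|) - s| + ε * N + |s - wm| := htri
      _ ≤ 2 * γ * N ^ (-τ₀) + ε * N + N * (C * ε₀) / 4 := by
          exact add_le_add (add_le_add hnear le_rfl) hsm'
    nlinarith [hε.le, hεε₀]
  -- multiply by N^{τ₀}
  have hrw : N ^ (-τ₀) * N ^ (τ₀ + 1) = N := by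
    rw [← Real.rpow_add hNpos]
    norm_num
  have hkey : 2 * γ ≤ (1 + C/4) * ε₀ * N ^ (τ₀ + 1) := by
    have h2 := mul_le_mul_of_nonneg_right hmain (Real.rpow_nonneg hNpos.le τ₀)
    have hNτ : N ^ (-τ₀) * N ^ τ₀ = 1 := by
      rw [← Real.rpow_add hNpos]; norm_num
    have hNτ1 : N * N ^ τ₀ = N ^ (τ₀ + 1) := by
      rw [Real.rpow_add hNpos, Real.rpow_one]; ring
    calc 2 * γ = 2 * γ * (N ^ (-τ₀) * N ^ τ₀) := by rw [hNτ]; ring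
    _ = 2 * γ * N ^ (-τ₀) * N ^ τ₀ := by ring
    _ ≤ (1 + C/4) * ε₀ * N * N ^ τ₀ := h2
    _ = (1 + C/4) * ε₀ * N ^ (τ₀ + 1) := by rw [← hNτ1]; ring
  have hdiv : 2 * γ / ((1 + C/4) * ε₀) ≤ N ^ (τ₀ + 1) := by
    rw [div_le_iff₀ (by positivity)]
    linarith [hkey]
  have hexp : (0:ℝ) < 1 / (τ₀ + 1) := by positivity
  have h2 := Real.rpow_le_rpow (by positivity) hdiv hexp.le
  have heq : (N ^ (τ₀ + 1)) ^ (1 / (τ₀ + 1)) = N := by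
    rw [← Real.rpow_mul hNpos.le, mul_one_div,
      div_self (by linarith : τ₀ + 1 ≠ 0), Real.rpow_one]
  rw [heq] at h2
  exact h2
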